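/- Let (X_i)_{i∈ℤ} be a sequence of real random variables and for b ≥ 1 define the overlapping blocks Y_{b,i} = (X_{i+1}, …, X_{i+b}) ∈ ℝ^b. Suppose that for all u, v ≥ 1, all bounded Lipschitz f : ℝ^{u} → ℝ and g : ℝ^{v} → ℝ with ‖f‖_∞, ‖g‖_∞ ≤ 1, and all indices s_1 ≤ ⋯ ≤ s_u ≤ t_1 ≤ ⋯ ≤ t_v with t_1 − s_u = r, one has |Cov(f(X_{s_1},…,X_{s_u}), g(X_{t_1},…,X_{t_v}))| ≤ (u·Lip f + v·Lip g)·η(r). Then the block sequence (Y_{b,i})_i satisfies the analogous bound with coefficient η_{Y_b}(r) ≤ b·η(r−b) for r ≥ b: for bounded Lipschitz F : (ℝ^b)^u → ℝ and G : (ℝ^b)^v → ℝ (with the ℓ¹ distance on (ℝ^b)^u ≅ ℝ^{ub}) with sup-norm at most 1, and block indices i_1 ≤ ⋯ ≤ i_u ≤ j_1 ≤ ⋯ ≤ j_v with j_1 − i_u = r ≥ b, |Cov(F(Y_{b,i_1},…,Y_{b,i_u}), G(Y_{b,j_1},…,Y_{b,j_v}))| ≤ (u·Lip F + v·Lip G)·b·η(r−b).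 -/

import Mathlib

open MeasureTheory Finset

theorem stmt_17 {Ω : Type*} [MeasureSpace Ω] [IsProbabilityMeasure (volume : Measure Ω)]
    (X : ℤ → Ω → ℝ) (hXm : ∀ i, Measurable (X i)) (η : ℕ → ℝ) (b : ℕ) (hb : 1 ≤ b)
    (hdep : ∀ (u v : ℕ) (f : (Fin (u + 1) → ℝ) → ℝ) (g : (Fin (v + 1) → ℝ) → ℝ)
      (Lf Lg : ℝ),
      (∀ a, |f a| ≤ 1) → (∀ a a', |f a - f a'| ≤ Lf * ∑ i, |a i - a' i|) →
      (∀ a, |g a| ≤ 1) → (∀ a a', |g a - g a'| ≤ Lg * ∑ i, |a i - a' i|) →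
      ∀ (s : Fin (u + 1) → ℤ) (t : Fin (v + 1) → ℤ), Monotone s → Monotone t →
      ∀ r : ℕ, t 0 - s (Fin.last u) = (r : ℤ) →
      |(∫ ω, f (fun i => X (s i) ω) * g (fun i => X (t i) ω)) -
          (∫ ω, f (fun i => X (s i) ω)) * ∫ ω, g (fun i => X (t i) ω)|
        ≤ ((u + 1 : ℝ) * Lf + (v + 1 : ℝ) * Lg) * η r) :
    ∀ (u v : ℕ) (F : (Fin (u + 1) → Fin b → ℝ) → ℝ)
      (G : (Fin (v + 1) → Fin b → ℝ) → ℝ) (LF LG : ℝ),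
      (∀ a, |F a| ≤ 1) →
      (∀ a a', |F a - F a'| ≤ LF * ∑ p, ∑ j, |a p j - a' p j|) →
      (∀ a, |G a| ≤ 1) →
      (∀ a a', |G a - G a'| ≤ LG * ∑ p, ∑ j, |a p j - a' p j|) →
      ∀ (I : Fin (u + 1) → ℤ) (J : Fin (v + 1) → ℤ), Monotone I → Monotone J →
      ∀ r : ℕ, b ≤ r → J 0 - I (Fin.last u) = (r : ℤ) →
      |(∫ ω, F (fun p j => X (I p + 1 + (j : ℤ)) ω) *
            G (fun p j => X (J p + 1 + (j : ℤ)) ω)) -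
          (∫ ω, F (fun p j => X (I p + 1 + (j : ℤ)) ω)) *
            ∫ ω, G (fun p j => X (J p + 1 + (j : ℤ)) ω)|
        ≤ ((u + 1 : ℝ) * LF + (v + 1 : ℝ) * LG) * ((b : ℝ) * η (r - b)) := by
  intro u v F G LF LG hF hFL hG hGL I J hI hJ r hbr hr
  have hbR : (0:ℝ) < b := by exact_mod_cast hb
  -- Lipschitz constants are nonnegative
  have hLF0 : 0 ≤ LF := by
    have h := hFL (fun _ _ => 0) (fun _ _ => 1)
    have hsum : (∑ p : Fin (u+1), ∑ j : Fin b, |(0:ℝ) - 1|) = ((u:ℝ)+1) * b := by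
      simp [Finset.sum_const, Finset.card_univ]
    rw [hsum] at h
    have hS : (0:ℝ) < ((u:ℝ)+1)*b := by positivity
    nlinarith [abs_nonneg (F (fun _ _ => (0:ℝ)) - F (fun _ _ => (1:ℝ))), hS]
  have hLG0 : 0 ≤ LG := by
    have h := hGL (fun _ _ => 0) (fun _ _ => 1)
    have hsum : (∑ p : Fin (v+1), ∑ j : Fin b, |(0:ℝ) - 1|) = ((v:ℝ)+1) * b := by
      simp [Finset.sum_const, Finset.card_univ]
    rw [hsum] at h
    have hS : (0:ℝ) < ((v:ℝ)+1)*b := by positivity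
    nlinarith [abs_nonneg (G (fun _ _ => (0:ℝ)) - G (fun _ _ => (1:ℝ))), hS]
  -- limit argument
  have htt : Filter.Tendsto
      (fun n : ℕ => ((u + 1 : ℝ) * LF + (v + 1 : ℝ) * LG) * ((b : ℝ) * η (r - b))
        + (LF * η (r - b)) / (n + 1)) Filter.atTop
      (nhds (((u + 1 : ℝ) * LF + (v + 1 : ℝ) * LG) * ((b : ℝ) * η (r - b)) + 0)) := by
    refine Filter.Tendsto.add tendsto_const_nhds ?_
    exact Filter.Tendsto.div_atTop tendsto_const_nhds
      (Filter.tendsto_atTop_add_const_right _ _ tendsto_natCast_atTop_atTop)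
  rw [add_zero] at htt
  refine ge_of_tendsto' htt ?_
  intro n
  set k := n + 1 with hk
  have hkR : (0:ℝ) < k := by positivity
  have hk0 : (k:ℝ) ≠ 0 := ne_of_gt hkR
  set u' := (u+1)*b*k with hu'
  set v' := (v+1)*b*k - 1 with hv'
  have hv'pos : 1 ≤ (v+1)*b*k := by
    have : 0 < (v+1)*b*k := by positivity
    omega
  have hv'1 : v' + 1 = (v+1)*b*k := by omega
  have cardf : Fintype.card ((Fin (u+1) × Fin b × Fin k) ⊕ Unit) = u' + 1 := by
    have : (u+1) * (b*k) = (u+1)*b*k := by ring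
    simp [this, hu']
  have cardg : Fintype.card (Fin (v+1) × Fin b × Fin k) = v' + 1 := by
    have : (v+1) * (b*k) = (v+1)*b*k := by ring
    simp [this, hv'1]
  set Ef : ((Fin (u+1) × Fin b × Fin k) ⊕ Unit) ≃ Fin (u'+1) :=
    Fintype.equivFinOfCardEq cardf with hEf
  set Eg : (Fin (v+1) × Fin b × Fin k) ≃ Fin (v'+1) :=
    Fintype.equivFinOfCardEq cardg with hEg
  set s0 : Fin (u'+1) → ℤ :=
    fun i => Sum.elim (fun x : Fin (u+1) × Fin b × Fin k => I x.1 + 1 + (x.2.1 : ℤ))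
      (fun _ => I (Fin.last u) + (b:ℤ) + 1) (Ef.symm i) with hs0
  set t1 : Fin (v'+1) → ℤ :=
    fun i => J (Eg.symm i).1 + 1 + ((Eg.symm i).2.1 : ℤ) with ht1
  set σ := Tuple.sort s0 with hσ
  set τ := Tuple.sort t1 with hτ
  have hsmono : Monotone (s0 ∘ σ) := Tuple.monotone_sort s0
  have htmono : Monotone (t1 ∘ τ) := Tuple.monotone_sort t1
  -- value of the last entry of the sorted s-tuple
  have hs0le : ∀ i, s0 i ≤ I (Fin.last u) + (b:ℤ) + 1 := by
    intro i
    simp only [hs0]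
    rcases h : Ef.symm i with x | x
    · simp only [Sum.elim_inl]
      have h1 : I x.1 ≤ I (Fin.last u) := hI (Fin.le_last x.1)
      have h2 : (x.2.1 : ℤ) ≤ (b:ℤ) - 1 := by
        have := x.2.1.isLt
        omega
      omega
    · simp only [Sum.elim_inr]
      exact le_refl _
  have hsd : s0 (Ef (Sum.inr ())) = I (Fin.last u) + (b:ℤ) + 1 := by
    simp [hs0]
  have hslast : (s0 ∘ σ) (Fin.last u') = I (Fin.last u) + (b:ℤ) + 1 := by
    refine le_antisymm (hs0le _) ?_
    have h1 : (s0 ∘ σ) (σ.symm (Ef (Sum.inr ()))) ≤ (s0 ∘ σ) (Fin.last u') :=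
      hsmono (Fin.le_last _)
    simpa [Function.comp, hsd] using h1
  -- value of the first entry of the sorted t-tuple
  have ht1ge : ∀ i, J 0 + 1 ≤ t1 i := by
    intro i
    simp only [ht1]
    have h1 : J 0 ≤ J (Eg.symm i).1 := hJ (Fin.zero_le _)
    have h2 : (0:ℤ) ≤ ((Eg.symm i).2.1 : ℤ) := by positivity
    omega
  have htd : t1 (Eg (⟨0, Nat.succ_pos v⟩, ⟨0, hb⟩, ⟨0, Nat.succ_pos n⟩)) = J ⟨0, Nat.succ_pos v⟩ + 1 := by
    simp [ht1]
  have htfirst : (t1 ∘ τ) 0 = J 0 + 1 := by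
    refine le_antisymm ?_ (ht1ge _)
    have h1 : (t1 ∘ τ) 0 ≤ (t1 ∘ τ) (τ.symm (Eg (⟨0, Nat.succ_pos v⟩, ⟨0, hb⟩, ⟨0, Nat.succ_pos n⟩))) :=
      htmono (Fin.zero_le _)
    simp only [Function.comp_apply, Equiv.apply_symm_apply, htd] at h1
    exact h1
  -- the gap
  have hgap : (t1 ∘ τ) 0 - (s0 ∘ σ) (Fin.last u') = ((r - b : ℕ) : ℤ) := by
    rw [htfirst, hslast, Nat.cast_sub hbr]
    omega
  -- the functions
  set f : (Fin (u'+1) → ℝ) → ℝ :=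
    fun a => F (fun p j => (∑ c : Fin k, a (σ.symm (Ef (Sum.inl (p, j, c))))) / k) with hf
  set g : (Fin (v'+1) → ℝ) → ℝ :=
    fun a => G (fun p j => (∑ c : Fin k, a (τ.symm (Eg (p, j, c)))) / k) with hg
  have hfb : ∀ a, |f a| ≤ 1 := by intro a; simp only [hf]; exact hF _
  have hgb : ∀ a, |g a| ≤ 1 := by intro a; simp only [hg]; exact hG _
  -- Lipschitz bound for f
  have hflip : ∀ a a', |f a - f a'| ≤ (LF / k) * ∑ i, |a i - a' i| := by
    intro a a'
    simp only [hf]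
    refine (hFL _ _).trans ?_
    have h2 : (∑ p : Fin (u+1), ∑ j : Fin b,
        |(∑ c : Fin k, a (σ.symm (Ef (Sum.inl (p, j, c))))) / k -
         (∑ c : Fin k, a' (σ.symm (Ef (Sum.inl (p, j, c))))) / k|)
        ≤ (∑ p : Fin (u+1), ∑ j : Fin b, ∑ c : Fin k,
            |a (σ.symm (Ef (Sum.inl (p, j, c)))) - a' (σ.symm (Ef (Sum.inl (p, j, c))))|) / k := by
      rw [Finset.sum_div]
      refine Finset.sum_le_sum (fun p _ => ?_)
      rw [Finset.sum_div]
      refine Finset.sum_le_sum (fun j _ => ?_)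
      rw [div_sub_div_same, abs_div, abs_of_pos hkR, ← Finset.sum_sub_distrib]
      gcongr
      exact Finset.abs_sum_le_sum_abs _ _
    have h3 : (∑ p : Fin (u+1), ∑ j : Fin b, ∑ c : Fin k,
            |a (σ.symm (Ef (Sum.inl (p, j, c)))) - a' (σ.symm (Ef (Sum.inl (p, j, c))))|)
        ≤ ∑ i, |a i - a' i| := by
      have e1 : ∑ y : (Fin (u+1) × Fin b × Fin k) ⊕ Unit,
          |a ((Ef.trans σ.symm) y) - a' ((Ef.trans σ.symm) y)| = ∑ i, |a i - a' i| :=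
        Equiv.sum_comp (Ef.trans σ.symm) (fun i => |a i - a' i|)
      rw [Fintype.sum_sum_type] at e1
      have e2 : ∑ x : Fin (u+1) × Fin b × Fin k,
          |a ((Ef.trans σ.symm) (Sum.inl x)) - a' ((Ef.trans σ.symm) (Sum.inl x))|
          = ∑ p : Fin (u+1), ∑ j : Fin b, ∑ c : Fin k,
            |a (σ.symm (Ef (Sum.inl (p, j, c)))) - a' (σ.symm (Ef (Sum.inl (p, j, c))))| := by
        rw [Fintype.sum_prod_type]
        refine Finset.sum_congr rfl (fun p _ => ?_)
        rw [Fintype.sum_prod_type]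
        simp [Equiv.trans_apply]
      have e3 : (0:ℝ) ≤ ∑ x : Unit, |a ((Ef.trans σ.symm) (Sum.inr x)) - a' ((Ef.trans σ.symm) (Sum.inr x))| :=
        Finset.sum_nonneg (fun _ _ => abs_nonneg _)
      rw [e2] at e1
      linarith
    calc LF * ∑ p : Fin (u+1), ∑ j : Fin b,
        |(∑ c : Fin k, a (σ.symm (Ef (Sum.inl (p, j, c))))) / k -
         (∑ c : Fin k, a' (σ.symm (Ef (Sum.inl (p, j, c))))) / k|
        ≤ LF * ((∑ i, |a i - a' i|) / k) := by
          refine mul_le_mul_of_nonneg_left (h2.trans ?_) hLF0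
          gcongr
      _ = (LF / k) * ∑ i, |a i - a' i| := by ring
  -- Lipschitz bound for g
  have hglip : ∀ a a', |g a - g a'| ≤ (LG / k) * ∑ i, |a i - a' i| := by
    intro a a'
    simp only [hg]
    refine (hGL _ _).trans ?_
    have h2 : (∑ p : Fin (v+1), ∑ j : Fin b,
        |(∑ c : Fin k, a (τ.symm (Eg (p, j, c)))) / k -
         (∑ c : Fin k, a' (τ.symm (Eg (p, j, c)))) / k|)
        ≤ (∑ p : Fin (v+1), ∑ j : Fin b, ∑ c : Fin k,
            |a (τ.symm (Eg (p, j, c))) - a' (τ.symm (Eg (p, j, c)))|) / k := by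
      rw [Finset.sum_div]
      refine Finset.sum_le_sum (fun p _ => ?_)
      rw [Finset.sum_div]
      refine Finset.sum_le_sum (fun j _ => ?_)
      rw [div_sub_div_same, abs_div, abs_of_pos hkR, ← Finset.sum_sub_distrib]
      gcongr
      exact Finset.abs_sum_le_sum_abs _ _
    have h3 : (∑ p : Fin (v+1), ∑ j : Fin b, ∑ c : Fin k,
            |a (τ.symm (Eg (p, j, c))) - a' (τ.symm (Eg (p, j, c)))|)
        = ∑ i, |a i - a' i| := by
      have e1 : ∑ y : Fin (v+1) × Fin b × Fin k,
          |a ((Eg.trans τ.symm) y) - a' ((Eg.trans τ.symm) y)| = ∑ i, |a i - a' i| :=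
        Equiv.sum_comp (Eg.trans τ.symm) (fun i => |a i - a' i|)
      rw [← e1, Fintype.sum_prod_type]
      refine Finset.sum_congr rfl (fun p _ => ?_)
      rw [Fintype.sum_prod_type]
      simp [Equiv.trans_apply]
    calc LG * ∑ p : Fin (v+1), ∑ j : Fin b,
        |(∑ c : Fin k, a (τ.symm (Eg (p, j, c)))) / k -
         (∑ c : Fin k, a' (τ.symm (Eg (p, j, c)))) / k|
        ≤ LG * ((∑ i, |a i - a' i|) / k) := by
          refine mul_le_mul_of_nonneg_left (h2.trans ?_) hLG0
          rw [h3]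
      _ = (LG / k) * ∑ i, |a i - a' i| := by ring
  -- apply the dependence hypothesis
  have H := hdep u' v' f g (LF/k) (LG/k) hfb hflip hgb hglip (s0 ∘ σ) (t1 ∘ τ)
    hsmono htmono (r - b) hgap
  -- identify the integrands
  have hfev : ∀ ω, f (fun i => X ((s0 ∘ σ) i) ω) = F (fun p j => X (I p + 1 + (j : ℤ)) ω) := by
    intro ω
    simp only [hf]
    congr 1
    funext p j
    have hc : ∀ c : Fin k, X ((s0 ∘ σ) (σ.symm (Ef (Sum.inl (p, j, c))))) ω
        = X (I p + 1 + (j : ℤ)) ω := by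
      intro c
      simp [Function.comp, hs0]
    rw [Finset.sum_congr rfl (fun c _ => hc c), Finset.sum_const, Finset.card_univ,
      Fintype.card_fin, nsmul_eq_mul]
    exact mul_div_cancel_left₀ _ hk0
  have hgev : ∀ ω, g (fun i => X ((t1 ∘ τ) i) ω) = G (fun p j => X (J p + 1 + (j : ℤ)) ω) := by
    intro ω
    simp only [hg]
    congr 1
    funext p j
    have hc : ∀ c : Fin k, X ((t1 ∘ τ) (τ.symm (Eg (p, j, c)))) ω
        = X (J p + 1 + (j : ℤ)) ω := by
      intro c
      simp [Function.comp, ht1]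
    rw [Finset.sum_congr rfl (fun c _ => hc c), Finset.sum_const, Finset.card_univ,
      Fintype.card_fin, nsmul_eq_mul]
    exact mul_div_cancel_left₀ _ hk0
  simp only [hfev, hgev] at H
  refine H.trans (le_of_eq ?_)
  have hcastu : ((u' : ℝ) + 1) = ((u:ℝ)+1)*b*k + 1 := by
    rw [hu']; push_cast; ring
  have hkn : ((k:ℕ):ℝ) = (n:ℝ) + 1 := by rw [hk]; push_cast; ring
  have hcastv : ((v' : ℝ) + 1) = ((v:ℝ)+1)*b*k := by
    have h5 : ((v' + 1 : ℕ) : ℝ) = (((v+1)*b*k : ℕ) : ℝ) := by rw [hv'1]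
    push_cast at h5
    rw [hkn] at h5 ⊢
    linarith
  rw [hcastu, hcastv, ← hkn]
  field_simp
  ring
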